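/- Every computable graph has a computable copy in which the set of universal vertices is computable. -/

import Mathlib

section AuxUniversal

theorem aux_finite' {p : ℕ → Prop} (h : {x | p x}.Finite) : ComputablePred p := by
  classical
  obtain ⟨l, hl⟩ : ∃ l : List ℕ, ∀ x, p x ↔ x ∈ l :=
    ⟨h.toFinset.toList, fun x => by simp⟩
  rw [ComputablePred.computable_iff]
  refine ⟨fun x => decide (l.idxOf x < l.length), Primrec.to_comp ?_, funext fun x => ?_⟩
  · exact Primrec.nat_lt.decide.comp (Primrec.list_idxOf₁ l) (Primrec.const _)
  · simp [hl x, List.idxOf_lt_length_iff]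


theorem aux_enum {f : ℕ → Bool} (hf : Computable f) (hinf : {n | f n = true}.Infinite) :
    ∃ b : ℕ → ℕ, Computable b ∧ StrictMono b ∧ (∀ k, f (b k) = true) ∧
      (∀ n, f n = true → ∃ k, b k = n) := by
  have h0 : ∃ n, f n = true := by
    obtain ⟨n, hn⟩ := hinf.nonempty; exact ⟨n, hn⟩
  have hnext : ∀ m : ℕ, ∃ n, m < n ∧ f n = true := by
    intro m
    obtain ⟨n, hn, hmn⟩ := hinf.exists_gt m
    exact ⟨n, hmn, hn⟩
  let g : ℕ → ℕ := fun m => Nat.find (hnext m)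
  have hg1 : ∀ m, m < g m ∧ f (g m) = true := fun m => Nat.find_spec (hnext m)
  have hg2 : ∀ m n, m < n → f n = true → g m ≤ n := fun m n h1 h2 => Nat.find_le ⟨h1, h2⟩
  have hg3 : ∀ m n, n < g m → ¬(m < n ∧ f n = true) := fun m n h => Nat.find_min (hnext m) h
  let b : ℕ → ℕ := fun k => Nat.rec (Nat.find h0) (fun _ prev => g prev) k
  have hb0 : b 0 = Nat.find h0 := rfl
  have hbs : ∀ k, b (k + 1) = g (b k) := fun k => rfl
  have hbt : ∀ k, f (b k) = true := by
    intro k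
    cases k with
    | zero => exact Nat.find_spec h0
    | succ k => exact (hg1 (b k)).2
  have hmono : StrictMono b := by
    apply strictMono_nat_of_lt_succ
    intro k
    exact (hg1 (b k)).1
  have hsurj : ∀ n, f n = true → ∃ k, b k = n := by
    intro n hn
    by_contra hns
    push_neg at hns
    have hle : ∀ k, b k ≤ n := by
      intro k
      induction k with
      | zero => exact hb0 ▸ Nat.find_le hn
      | succ k ih =>
        have hlt : b k < n := lt_of_le_of_ne ih (hns k)
        exact (hbs k) ▸ hg2 (b k) n hlt hn
    have h1 : n + 1 ≤ b (n + 1) := hmono.le_apply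
    have h2 : b (n + 1) ≤ n := hle (n + 1)
    omega
  refine ⟨b, ?_, hmono, hbt, hsurj⟩
  -- computability
  have hpos : Partrec fun k : ℕ =>
      Nat.rec (motive := fun _ => Part ℕ) (Nat.rfind fun n => Part.some (f n))
        (fun y IH => IH.bind fun i =>
          (fun (_ : ℕ) (p : ℕ × ℕ) =>
            (Nat.rfind fun n => Part.some (f (p.2 + 1 + n))).map fun n => p.2 + 1 + n) k (y, i)) k := by
    have := Partrec.nat_rec (α := ℕ) (σ := ℕ) (f := id)
      (g := fun _ => Nat.rfind fun n => Part.some (f n))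
      (h := fun (_ : ℕ) (p : ℕ × ℕ) =>
        (Nat.rfind fun n => Part.some (f (p.2 + 1 + n))).map fun n => p.2 + 1 + n)
      Computable.id
      (Partrec.rfind (Partrec.to₂ (f := fun p : ℕ × ℕ => (Part.some (f p.2) : Part Bool))
        ((hf.comp Computable.snd).partrec)))
      ?hh
    · exact this.of_eq fun k => by simp
    case hh =>
      have hadd : Computable₂ (fun a b : ℕ => a + b) := Primrec.nat_add.to_comp
      have hsum : Computable fun r : (ℕ × (ℕ × ℕ)) × ℕ => r.1.2.2 + 1 + r.2 :=
        hadd.comp (hadd.comp (Computable.snd.comp (Computable.snd.comp Computable.fst))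
          (Computable.const 1)) Computable.snd
      apply Partrec.to₂ (f := fun q : ℕ × (ℕ × ℕ) =>
        (Nat.rfind fun n => Part.some (f (q.2.2 + 1 + n))).map fun n => q.2.2 + 1 + n)
      apply Partrec.map
      · apply Partrec.rfind
        exact Partrec.to₂
          (f := fun r : (ℕ × (ℕ × ℕ)) × ℕ => (Part.some (f (r.1.2.2 + 1 + r.2)) : Part Bool))
          ((hf.comp hsum).partrec)
      · exact Computable.to₂ (f := fun r : (ℕ × (ℕ × ℕ)) × ℕ => r.1.2.2 + 1 + r.2) hsum
  apply Partrec.of_eq_tot hpos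
  intro k
  induction k with
  | zero =>
    show b 0 ∈ Nat.rfind fun n => Part.some (f n)
    refine Nat.mem_rfind.2 ?_
    constructor
    · rw [Part.mem_some_iff]; exact (hbt 0).symm
    · intro m hm
      rw [Part.mem_some_iff]
      have := Nat.find_min h0 (hb0 ▸ hm)
      exact (Bool.eq_false_iff.2 this).symm
  | succ k ih =>
    show b (k + 1) ∈ Part.bind _ _
    rw [Part.mem_bind_iff]
    refine ⟨b k, ih, ?_⟩
    rw [Part.mem_map_iff]
    have hlt : b k < b (k + 1) := hmono (Nat.lt_succ_self k)
    refine ⟨b (k + 1) - (b k + 1), ?_, by omega⟩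
    refine Nat.mem_rfind.2 ?_
    constructor
    · have h1 : b k + 1 + (b (k+1) - (b k + 1)) = b (k + 1) := by omega
      rw [h1, Part.mem_some_iff]
      exact (hbt (k+1)).symm
    · intro m hm
      rw [Part.mem_some_iff]
      show false = f (b k + 1 + m)
      have hlt2 : b k + 1 + m < b (k + 1) := by omega
      have hgt : b k < b k + 1 + m := by omega
      rw [hbs] at hlt2
      have := hg3 (b k) (b k + 1 + m) hlt2
      rw [eq_comm, Bool.eq_false_iff]
      intro hft
      exact this ⟨hgt, hft⟩

end AuxUniversal

/-- Every computable graph has a computable copy in which the set of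
universal vertices is computable. -/
theorem computable_copy_with_computable_universal_set (G : SimpleGraph ℕ)
    (hG : ComputablePred fun p : ℕ × ℕ => G.Adj p.1 p.2) :
    ∃ H : SimpleGraph ℕ,
      ComputablePred (fun p : ℕ × ℕ => H.Adj p.1 p.2) ∧
      Nonempty (G ≃g H) ∧
      ComputablePred (fun x => ∀ y, y ≠ x → H.Adj x y) := by
  classical
  by_cases hU : ComputablePred (fun x : ℕ => ∀ y, y ≠ x → G.Adj x y)
  · exact ⟨G, hG, ⟨RelIso.refl G.Adj⟩, hU⟩
  -- the universal set is not computable, hence both it and its complement are infinite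
  set A : ℕ → Prop := fun x => ∀ y, y ≠ x → G.Adj x y with hA
  obtain ⟨c, hc, hceq⟩ := ComputablePred.computable_iff.1 hG
  have hcadj : ∀ x y, G.Adj x y ↔ c (x, y) = true := by
    intro x y
    have := congrFun hceq (x, y)
    simpa using iff_of_eq this
  have hUinf : {x | A x}.Infinite := by
    by_contra hfin
    exact hU (aux_finite' (Set.not_infinite.1 hfin))
  have hNUinf : {x | ¬ A x}.Infinite := by
    by_contra hfin
    have h1 : ComputablePred fun x => ¬ A x := aux_finite' (Set.not_infinite.1 hfin)
    exact hU (h1.not.of_eq fun x => not_not)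
  -- the bounded "all previous are neighbours or self" test
  let low : ℕ → ℕ → Bool := fun x y =>
    Nat.rec true (fun y' ih => ih && (decide (y' = x) || c (x, y'))) y
  have hlow_succ : ∀ x y, low x (y + 1) = (low x y && (decide (y = x) || c (x, y))) :=
    fun x y => rfl
  have hlow_iff : ∀ x y, low x y = true ↔ ∀ y' < y, y' = x ∨ G.Adj x y' := by
    intro x y
    induction y with
    | zero => simp [low]
    | succ y ih =>
      rw [hlow_succ, Bool.and_eq_true, ih, Bool.or_eq_true, decide_eq_true_eq]
      constructor
      · rintro ⟨h1, h2⟩ z hz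
        rcases Nat.lt_succ_iff_lt_or_eq.1 hz with h | rfl
        · exact h1 z h
        · rcases h2 with h | h
          · exact Or.inl h
          · exact Or.inr ((hcadj x z).2 h)
      · intro h
        refine ⟨fun z hz => h z (by omega), ?_⟩
        rcases h y (by omega) with h' | h'
        · exact Or.inl h'
        · exact Or.inr ((hcadj x y).1 h')
  have hlowc : Computable fun p : ℕ × ℕ => low p.1 p.2 := by
    have hband : Computable₂ and := Primrec.and.to_comp
    have hbor : Computable₂ or := Primrec.or.to_comp
    have heq : Computable₂ fun a b : ℕ => decide (a = b) := Primrec.eq.decide.to_comp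
    have hh : Computable₂ fun (p : ℕ × ℕ) (q : ℕ × Bool) =>
        (q.2 && (decide (q.1 = p.1) || c (p.1, q.1))) := by
      apply Computable.to₂ (f := fun r : (ℕ × ℕ) × ℕ × Bool =>
        r.2.2 && (decide (r.2.1 = r.1.1) || c (r.1.1, r.2.1)))
      exact hband.comp (Computable.snd.comp Computable.snd)
        (hbor.comp
          (heq.comp (Computable.fst.comp Computable.snd) (Computable.fst.comp Computable.fst))
          (hc.comp ((Computable.fst.comp Computable.fst).pair
            (Computable.fst.comp Computable.snd))))
    exact (Computable.nat_rec Computable.snd (Computable.const true) hh).of_eq fun p => rfl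
  -- the test for pairs ⟨x, y⟩ : y is the least witness that x is not universal
  let test : ℕ → Bool := fun n =>
    (!(decide (n.unpair.2 = n.unpair.1))) &&
      ((!(c (n.unpair.1, n.unpair.2))) && low n.unpair.1 n.unpair.2)
  have htest_iff : ∀ n, test n = true ↔
      (n.unpair.2 ≠ n.unpair.1 ∧ ¬ G.Adj n.unpair.1 n.unpair.2 ∧
        ∀ y' < n.unpair.2, y' = n.unpair.1 ∨ G.Adj n.unpair.1 y') := by
    intro n
    simp only [test, Bool.and_eq_true, Bool.not_eq_true', decide_eq_false_iff_not,
      Bool.not_eq_true, hlow_iff, hcadj]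
    try tauto
  have htestc : Computable test := by
    have hup : Computable Nat.unpair := Primrec.unpair.to_comp
    have hband : Computable₂ and := Primrec.and.to_comp
    have hnot : Computable not := (Primrec.not).to_comp
    have heq : Computable₂ fun a b : ℕ => decide (a = b) := Primrec.eq.decide.to_comp
    exact hband.comp
      (hnot.comp (heq.comp (Computable.snd.comp hup) (Computable.fst.comp hup)))
      (hband.comp
        (hnot.comp (hc.comp ((Computable.fst.comp hup).pair (Computable.snd.comp hup))))
        (hlowc.comp hup))
  -- witnesses for non-universal vertices
  have hwitness : ∀ x, ¬ A x → ∃ y, test (Nat.pair x y) = true := by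
    intro x hx
    have hex : ∃ y, y ≠ x ∧ ¬ G.Adj x y := by
      by_contra hcon
      push_neg at hcon
      exact hx fun y hy => hcon y hy
    refine ⟨Nat.find hex, ?_⟩
    rw [htest_iff]
    rw [Nat.unpair_pair]
    refine ⟨(Nat.find_spec hex).1, (Nat.find_spec hex).2, ?_⟩
    intro z hz
    have := Nat.find_min hex hz
    tauto
  have hSinf : {n | test n = true}.Infinite := by
    haveI : Infinite ↥{x | ¬ A x} := hNUinf.to_subtype
    have hwit : ∀ z : ↥{x | ¬ A x}, ∃ y, test (Nat.pair z.1 y) = true :=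
      fun z => hwitness z.1 z.2
    apply Set.infinite_of_injective_forall_mem
      (f := fun z : ↥{x | ¬ A x} => Nat.pair z.1 (hwit z).choose)
    · intro z w hzw
      have := congrArg (fun n => n.unpair.1) hzw
      simpa [Nat.unpair_pair, Subtype.ext_iff] using this
    · intro z
      exact (hwit z).choose_spec
  obtain ⟨b, hbc, hbmono, hbt, hbsurj⟩ := aux_enum htestc hSinf
  -- the enumeration of the non-universal vertices
  let u : ℕ → ℕ := fun k => (b k).unpair.1
  have huc : Computable u :=
    Computable.fst.comp (Primrec.unpair.to_comp.comp hbc)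
  have hu_prop : ∀ k, (b k).unpair.2 ≠ u k ∧ ¬ G.Adj (u k) ((b k).unpair.2) ∧
      ∀ z < (b k).unpair.2, z = u k ∨ G.Adj (u k) z := fun k => (htest_iff (b k)).1 (hbt k)
  have hu_mem : ∀ k, ¬ A (u k) := by
    intro k hk
    obtain ⟨h1, h2, _⟩ := hu_prop k
    exact h2 (hk _ h1)
  have hu_inj : Function.Injective u := by
    intro k k' hkk
    obtain ⟨h1, h2, h3⟩ := hu_prop k
    obtain ⟨h1', h2', h3'⟩ := hu_prop k'
    have hyy : (b k).unpair.2 = (b k').unpair.2 := by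
      rcases lt_trichotomy (b k).unpair.2 (b k').unpair.2 with h | h | h
      · rcases h3' _ h with h' | h'
        · exact absurd (h'.trans hkk.symm) h1
        · rw [hkk] at h2; exact absurd h' h2
      · exact h
      · rcases h3 _ h with h' | h'
        · exact absurd (h'.trans hkk) h1'
        · rw [← hkk] at h2'; exact absurd h' h2'
    have hb : b k = b k' := by
      have e1 : b k = Nat.pair (u k) ((b k).unpair.2) := by
        simp [u, Nat.pair_unpair]
      have e2 : b k' = Nat.pair (u k') ((b k').unpair.2) := by
        simp [u, Nat.pair_unpair]
      rw [e1, e2, hkk, hyy]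
    exact hbmono.injective hb
  have hu_surj : ∀ x, ¬ A x → ∃ k, u k = x := by
    intro x hx
    obtain ⟨y, hy⟩ := hwitness x hx
    obtain ⟨k, hk⟩ := hbsurj _ hy
    exact ⟨k, by simp [u, hk, Nat.unpair_pair]⟩
  -- the copy
  let H : SimpleGraph ℕ :=
    { Adj := fun m n => m ≠ n ∧ (m % 2 = 0 ∨ n % 2 = 0 ∨ G.Adj (u (m / 2)) (u (n / 2)))
      symm := by
        constructor
        rintro m n ⟨h1, h2⟩
        refine ⟨h1.symm, ?_⟩
        rcases h2 with h | h | h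
        · exact Or.inr (Or.inl h)
        · exact Or.inl h
        · exact Or.inr (Or.inr h.symm)
      loopless := ⟨by rintro m ⟨h1, _⟩; exact h1 rfl⟩ }
  have hHadj : ∀ m n, H.Adj m n ↔
      (m ≠ n ∧ (m % 2 = 0 ∨ n % 2 = 0 ∨ G.Adj (u (m / 2)) (u (n / 2)))) := fun m n => Iff.rfl
  -- computability of the adjacency relation of H
  have hH1 : ComputablePred fun p : ℕ × ℕ => H.Adj p.1 p.2 := by
    rw [ComputablePred.computable_iff]
    refine ⟨fun p => (!(decide (p.1 = p.2))) &&
      (decide (p.1 % 2 = 0) || decide (p.2 % 2 = 0) || c (u (p.1 / 2), u (p.2 / 2))), ?_, ?_⟩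
    · have hband : Computable₂ and := Primrec.and.to_comp
      have hbor : Computable₂ or := Primrec.or.to_comp
      have hnot : Computable not := Primrec.not.to_comp
      have heq : Computable₂ fun a b : ℕ => decide (a = b) := Primrec.eq.decide.to_comp
      have hmod : Computable fun n : ℕ => n % 2 :=
        Primrec.to_comp (Primrec.nat_mod.comp Primrec.id (Primrec.const 2))
      have hdiv : Computable fun n : ℕ => n / 2 :=
        Primrec.to_comp (Primrec.nat_div.comp Primrec.id (Primrec.const 2))
      exact hband.comp (hnot.comp (heq.comp Computable.fst Computable.snd))
        (hbor.comp
          (hbor.comp (heq.comp (hmod.comp Computable.fst) (Computable.const 0))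
            (heq.comp (hmod.comp Computable.snd) (Computable.const 0)))
          (hc.comp ((huc.comp (hdiv.comp Computable.fst)).pair
            (huc.comp (hdiv.comp Computable.snd)))))
    · funext p
      apply propext
      rw [hHadj]
      simp only [Bool.and_eq_true, Bool.or_eq_true, Bool.not_eq_true', decide_eq_false_iff_not,
        decide_eq_true_eq, hcadj]
      tauto
  -- the universal vertices of H are exactly the even numbers
  have hH2iff : ∀ x, (∀ y, y ≠ x → H.Adj x y) ↔ x % 2 = 0 := by
    intro x
    constructor
    · intro hx
      by_contra hodd
      -- x is odd; find a non-neighbour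
      have hx2 : x % 2 = 1 := by omega
      obtain ⟨w, hw1, hw2⟩ : ∃ w, w ≠ u (x / 2) ∧ ¬ G.Adj (u (x / 2)) w := by
        by_contra hcon
        push_neg at hcon
        exact hu_mem (x / 2) fun y hy => hcon y hy
      have hwnA : ¬ A w := by
        intro hwA
        exact hw2 ((hwA _ (fun h => hw1 h.symm)).symm)
      obtain ⟨j, hj⟩ := hu_surj w hwnA
      have hyx : 2 * j + 1 ≠ x := by
        intro h
        apply hw1
        rw [← hj]
        congr 1
        omega
      have := hx _ hyx
      rw [hHadj] at this
      obtain ⟨_, h⟩ := this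
      rcases h with h | h | h
      · omega
      · omega
      · apply hw2
        have e1 : x / 2 = x / 2 := rfl
        have e2 : (2 * j + 1) / 2 = j := by omega
        rw [e2, hj] at h
        exact h
    · intro hx y hyx
      rw [hHadj]
      exact ⟨fun h => hyx h.symm, Or.inl hx⟩
  have hH2 : ComputablePred fun x => ∀ y, y ≠ x → H.Adj x y := by
    rw [ComputablePred.computable_iff]
    refine ⟨fun x => decide (x % 2 = 0), ?_, ?_⟩
    · exact Primrec.to_comp
        (Primrec.eq.decide.comp (Primrec.nat_mod.comp Primrec.id (Primrec.const 2)) (Primrec.const 0))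
    · funext x
      apply propext
      rw [hH2iff]
      simp
  -- the isomorphism
  haveI hci : ∀ p : ℕ → Prop, Countable {x // p x} := fun p => Subtype.countable
  haveI hinfA : Infinite {x // A x} := hUinf.to_subtype
  haveI hinfE : Infinite {x : ℕ // x % 2 = 0} := by
    have : {x : ℕ | x % 2 = 0}.Infinite := by
      apply Set.infinite_of_injective_forall_mem (f := fun k : ℕ => 2 * k)
      · intro a b hab
        have h2 : 2 * a = 2 * b := hab
        omega
      · intro a
        show 2 * a % 2 = 0
        omega
    exact this.to_subtype
  haveI : Encodable {x // A x} := Encodable.ofCountable _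
  haveI : Encodable {x : ℕ // x % 2 = 0} := Encodable.ofCountable _
  haveI : Denumerable {x // A x} := Denumerable.ofEncodableOfInfinite _
  haveI : Denumerable {x : ℕ // x % 2 = 0} := Denumerable.ofEncodableOfInfinite _
  let e1 : {x // A x} ≃ {x : ℕ // x % 2 = 0} :=
    (Denumerable.eqv _).trans (Denumerable.eqv _).symm
  have hbu : Function.Bijective (fun k => (⟨u k, hu_mem k⟩ : {x // ¬ A x})) := by
    constructor
    · intro k k' h
      exact hu_inj (congrArg Subtype.val h)
    · rintro ⟨x, hx⟩
      obtain ⟨k, hk⟩ := hu_surj x hx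
      exact ⟨k, Subtype.ext hk⟩
  have hbo : Function.Bijective (fun k => (⟨2 * k + 1, by omega⟩ : {x : ℕ // ¬ x % 2 = 0})) := by
    constructor
    · intro k k' h
      have h2 : 2 * k + 1 = 2 * k' + 1 := congrArg Subtype.val h
      omega
    · rintro ⟨x, hx⟩
      refine ⟨x / 2, Subtype.ext ?_⟩
      show 2 * (x / 2) + 1 = x
      omega
  let e2 : {x // ¬ A x} ≃ {x : ℕ // ¬ x % 2 = 0} :=
    (Equiv.ofBijective _ hbu).symm.trans (Equiv.ofBijective _ hbo)
  let e : ℕ ≃ ℕ :=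
    ((Equiv.sumCompl A).symm.trans (Equiv.sumCongr e1 e2)).trans
      (Equiv.sumCompl (fun x : ℕ => x % 2 = 0))
  have he1 : ∀ a, (h : A a) → e a = (e1 ⟨a, h⟩ : ℕ) := by
    intro a h
    simp only [e, Equiv.trans_apply, Equiv.sumCompl_symm_apply_of_pos h,
      Equiv.sumCongr_apply, Sum.map_inl, Equiv.sumCompl_apply_inl]
  have he2 : ∀ a, (h : ¬ A a) → ∃ k, u k = a ∧ e a = 2 * k + 1 := by
    intro a h
    refine ⟨(Equiv.ofBijective _ hbu).symm ⟨a, h⟩, ?_, ?_⟩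
    · have := (Equiv.ofBijective _ hbu).apply_symm_apply ⟨a, h⟩
      exact congrArg Subtype.val this
    · simp only [e, Equiv.trans_apply, Equiv.sumCompl_symm_apply_of_neg h,
        Equiv.sumCongr_apply, Sum.map_inr, Equiv.sumCompl_apply_inr]
      rfl
  have hiso : Nonempty (G ≃g H) := by
    refine ⟨⟨e, ?_⟩⟩
    intro a b
    show H.Adj (e a) (e b) ↔ G.Adj a b
    by_cases hab : a = b
    · subst hab
      simp [H.irrefl, G.irrefl]
    have heab : e a ≠ e b := fun h => hab (e.injective h)
    by_cases ha : A a
    · have hGa : G.Adj a b := ha b (Ne.symm hab)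
      have hHa : H.Adj (e a) (e b) := by
        rw [hHadj]
        refine ⟨heab, Or.inl ?_⟩
        rw [he1 a ha]
        exact (e1 ⟨a, ha⟩).2
      exact iff_of_true hHa hGa
    by_cases hb : A b
    · have hGa : G.Adj a b := (hb a hab).symm
      have hHa : H.Adj (e a) (e b) := by
        rw [hHadj]
        refine ⟨heab, Or.inr (Or.inl ?_)⟩
        rw [he1 b hb]
        exact (e1 ⟨b, hb⟩).2
      exact iff_of_true hHa hGa
    · obtain ⟨k, hk, hek⟩ := he2 a ha
      obtain ⟨j, hj, hej⟩ := he2 b hb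
      rw [hHadj, hek, hej]
      have d1 : (2 * k + 1) / 2 = k := by omega
      have d2 : (2 * j + 1) / 2 = j := by omega
      rw [d1, d2, hk, hj]
      constructor
      · rintro ⟨-, h⟩
        rcases h with h | h | h
        · omega
        · omega
        · exact h
      · intro h
        exact ⟨by rw [← hek, ← hej]; exact heab, Or.inr (Or.inr h)⟩
  exact ⟨H, hH1, hiso, hH2⟩
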